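/- arXiv:2212.09254 — 2 statements merged into one kernel-verified Lean document; each statement's English description precedes it below -/
import Mathlib

section
/- Let z' ∈ ℝ^L and let P_{[0,1]} act coordinatewise. If ∑ᵢ P_{[0,1]}(z'ᵢ) ≤ k, then the coordinatewise clipped vector P_{[0,1]}(z') equals the Euclidean projection of z' onto C₁ = {z ∈ [0,1]^L : ∑ᵢ zᵢ ≤ k}. -/
/-- The clipping map onto `[0,1]`. -/
noncomputable def clip01 (x : ℝ) : ℝ := min (max x 0) 1

lemma clip01_closest (t x : ℝ) (h0 : 0 ≤ x) (h1 : x ≤ 1) :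
    (clip01 t - t) ^ 2 ≤ (x - t) ^ 2 := by
  unfold clip01
  rcases le_total t 0 with h | h
  · rw [max_eq_right h, min_eq_left (by norm_num)]
    nlinarith
  · rw [max_eq_left h]
    rcases le_total t 1 with h' | h'
    · rw [min_eq_left h']; nlinarith [sq_nonneg (x - t)]
    · rw [min_eq_right h']; nlinarith

theorem clip_is_projection_onto_budget_set (L : ℕ) (k : ℝ) (hk : 0 ≤ k)
    (z' : Fin L → ℝ) (hsum : ∑ i, clip01 (z' i) ≤ k) :
    ((∀ i, 0 ≤ clip01 (z' i) ∧ clip01 (z' i) ≤ 1) ∧ ∑ i, clip01 (z' i) ≤ k) ∧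
    ∀ x : Fin L → ℝ, ((∀ i, 0 ≤ x i ∧ x i ≤ 1) ∧ ∑ i, x i ≤ k) →
      ∑ i, (clip01 (z' i) - z' i) ^ 2 ≤ ∑ i, (x i - z' i) ^ 2 := by
  refine ⟨⟨fun i => ⟨?_, ?_⟩, hsum⟩, fun x ⟨hx, _⟩ => ?_⟩
  · exact le_min (le_max_right _ _) zero_le_one
  · exact min_le_right _ _
  · exact Finset.sum_le_sum fun i _ => clip01_closest _ _ (hx i).1 (hx i).2
end

section
/- Let u' ∈ ℝ^m and suppose υ ∈ ℝ satisfies ∑ⱼ P_{[0,1]}(u'ⱼ − υ) = 1. Then the vector with coordinates P_{[0,1]}(u'ⱼ − υ) equals the Euclidean projection of u' onto the simplex C₂ = {u ∈ [0,1]^m : ∑ⱼ uⱼ = 1}. -/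
lemma clip01_ineq (u t : ℝ) (hu0 : 0 ≤ u) (hu1 : u ≤ 1) :
    0 ≤ (u - clip01 t) * (clip01 t - t) := by
  unfold clip01
  rcases le_total t 0 with h | h
  · rw [max_eq_right h, min_eq_left (by norm_num)]; nlinarith
  · rw [max_eq_left h]
    rcases le_total t 1 with h1 | h1
    · rw [min_eq_left h1]; simp
    · rw [min_eq_right h1]; nlinarith

theorem shifted_clip_is_projection_onto_simplex (m : ℕ) (hm : 1 ≤ m)
    (u' : Fin m → ℝ) (υ : ℝ) (hsum : ∑ j, clip01 (u' j - υ) = 1) :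
    ((∀ j, 0 ≤ clip01 (u' j - υ) ∧ clip01 (u' j - υ) ≤ 1) ∧
      ∑ j, clip01 (u' j - υ) = 1) ∧
    ∀ u : Fin m → ℝ, ((∀ j, 0 ≤ u j ∧ u j ≤ 1) ∧ ∑ j, u j = 1) →
      ∑ j, (clip01 (u' j - υ) - u' j) ^ 2 ≤ ∑ j, (u j - u' j) ^ 2 := by
  set p : Fin m → ℝ := fun j => clip01 (u' j - υ) with hp
  refine ⟨⟨fun j => ⟨le_min (le_max_right _ _) zero_le_one, min_le_right _ _⟩, hsum⟩, ?_⟩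
  rintro u ⟨hub, husum⟩
  have hsum0 : ∑ j, (u j - p j) = 0 := by
    rw [Finset.sum_sub_distrib, husum, hsum]; ring
  have key : 0 ≤ ∑ j, (u j - p j) * (p j - u' j) := by
    have heq : ∑ j, (u j - p j) * (p j - u' j)
        = ∑ j, (u j - p j) * (p j - (u' j - υ)) - υ * ∑ j, (u j - p j) := by
      rw [Finset.mul_sum, ← Finset.sum_sub_distrib]
      exact Finset.sum_congr rfl (fun j _ => by ring)
    rw [heq, hsum0, mul_zero, sub_zero]
    exact Finset.sum_nonneg fun j _ => clip01_ineq _ _ (hub j).1 (hub j).2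
  have hdiff : ∑ j, (u j - u' j) ^ 2 - ∑ j, (p j - u' j) ^ 2
      = ∑ j, (u j - p j) ^ 2 + 2 * ∑ j, (u j - p j) * (p j - u' j) := by
    rw [Finset.mul_sum, ← Finset.sum_add_distrib, ← Finset.sum_sub_distrib]
    exact Finset.sum_congr rfl (fun j _ => by ring)
  have hsq : 0 ≤ ∑ j, (u j - p j) ^ 2 :=
    Finset.sum_nonneg fun j _ => sq_nonneg _
  linarith
end
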